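/- For n ≥ 5 with n ≡ 2 (mod 4), the cycle C_n is not a 2-threshold graph. -/

import Mathlib

/-- For n ≥ 5 with n ≡ 2 (mod 4), Cₙ is not a 2-threshold graph. -/
theorem cn_two_mod_four_not_two_threshold (n : ℕ) (hn : 5 ≤ n) (hmod : n % 4 = 2) :
    ¬ ∃ (θ₁ θ₂ : ℝ), θ₁ < θ₂ ∧ ∃ r : Fin n → ℝ, ∀ u v : Fin n, u ≠ v →
      ((SimpleGraph.cycleGraph n).Adj u v ↔ θ₁ ≤ r u + r v ∧ r u + r v < θ₂) := by
  rintro ⟨θ₁, θ₂, hθ, r, h⟩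
  haveI : NeZero n := ⟨by omega⟩
  letI : CommRing (Fin n) := Fin.instCommRing n
  set m : ℕ := n / 2 with hmdef
  have hnm : n = 2 * m := by omega
  have hm3 : 3 ≤ m := by omega
  have hmodd : m % 2 = 1 := by omega
  -- value of difference of casts
  have hval : ∀ a b : ℕ, b < n → (((a + b : ℕ) : Fin n) - (a : Fin n)).val = b := by
    intro a b hb
    have : ((a + b : ℕ) : Fin n) - (a : Fin n) = (b : Fin n) := by push_cast; ring
    rw [this, Fin.val_cast_of_lt hb]
  have hcastn : ∀ a : ℕ, ((a + n : ℕ) : Fin n) = (a : Fin n) := by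
    intro a
    push_cast [Fin.natCast_self]
    ring
  -- consecutive vertices are distinct and adjacent
  have hne1 : ∀ k : ℕ, ((k : Fin n) : Fin n) ≠ ((k + 1 : ℕ) : Fin n) := by
    intro k hEq
    have := hval k 1 (by omega)
    rw [← hEq] at this
    simp at this
  have hadj : ∀ k : ℕ, (SimpleGraph.cycleGraph n).Adj (k : Fin n) ((k + 1 : ℕ) : Fin n) := by
    intro k
    rw [SimpleGraph.cycleGraph_adj']
    exact Or.inr (hval k 1 (by omega))
  -- diagonal vertices are distinct and non-adjacent
  have hvalm : ∀ k : ℕ, (((k + m : ℕ) : Fin n) - (k : Fin n)).val = m :=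
    fun k => hval k m (by omega)
  have hvalm' : ∀ k : ℕ, ((k : Fin n) - ((k + m : ℕ) : Fin n)).val = m := by
    intro k
    have h1 := hval (k + m) (n - m) (by omega)
    have h2 : k + m + (n - m) = k + n := by omega
    rw [h2, hcastn k] at h1
    rw [h1]
    omega
  have hnem : ∀ k : ℕ, ((k : Fin n) : Fin n) ≠ ((k + m : ℕ) : Fin n) := by
    intro k hEq
    have := hvalm k
    rw [← hEq] at this
    simp at this
    omega
  have hnonadj : ∀ k : ℕ, ¬ (SimpleGraph.cycleGraph n).Adj (k : Fin n) ((k + m : ℕ) : Fin n) := by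
    intro k hA
    rw [SimpleGraph.cycleGraph_adj'] at hA
    rcases hA with hA | hA
    · rw [hvalm' k] at hA; omega
    · rw [hvalm k] at hA; omega
  -- edge inequalities
  have hedge : ∀ k : ℕ, θ₁ ≤ r (k : Fin n) + r ((k + 1 : ℕ) : Fin n) ∧
      r (k : Fin n) + r ((k + 1 : ℕ) : Fin n) < θ₂ := by
    intro k
    exact (h _ _ (hne1 k)).mp (hadj k)
  -- diagonal sums
  set s : ℕ → ℝ := fun k => r (k : Fin n) + r ((k + m : ℕ) : Fin n) with hsdef
  have hnonedge : ∀ k : ℕ, ¬ (θ₁ ≤ s k ∧ s k < θ₂) := by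
    intro k hc
    exact hnonadj k ((h _ _ (hnem k)).mpr hc)
  -- consecutive diagonals have opposite types
  have hflip : ∀ k : ℕ, (s k < θ₁ ↔ ¬ (s (k + 1) < θ₁)) := by
    intro k
    have e1 := hedge k
    have e2 := hedge (k + m)
    have hk1 : k + 1 + m = k + m + 1 := by omega
    have hsk : s k = r (k : Fin n) + r ((k + m : ℕ) : Fin n) := rfl
    have hsk1 : s (k + 1) = r ((k + 1 : ℕ) : Fin n) + r ((k + m + 1 : ℕ) : Fin n) := by
      simp only [hsdef, hk1]
    have nA := hnonedge k
    have nB := hnonedge (k + 1)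
    rw [hsk1] at nB
    rw [hsk] at nA
    constructor
    · intro hlow hlow'
      rw [hsk] at hlow
      rw [hsk1] at hlow'
      linarith [e1.1, e2.1]
    · intro hnotlow
      rw [hsk]
      by_contra hnotA
      push_neg at hnotA
      rw [hsk1] at hnotlow
      push_neg at hnotlow
      have hBhi : θ₂ ≤ r ((k + 1 : ℕ) : Fin n) + r ((k + m + 1 : ℕ) : Fin n) := by
        by_contra hc
        push_neg at hc
        exact nB ⟨hnotlow, hc⟩
      have hAhi : θ₂ ≤ r (k : Fin n) + r ((k + m : ℕ) : Fin n) := by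
        by_contra hc
        push_neg at hc
        exact nA ⟨hnotA, hc⟩
      linarith [e1.2, e2.2]
  -- periodicity: s (k + m) = s k
  have hper : s m = s 0 := by
    have h1 : ((m + m : ℕ) : Fin n) = ((0 : ℕ) : Fin n) := by
      have : m + m = 0 + n := by omega
      rw [this, hcastn 0]
    simp only [hsdef, h1]
    rw [show (0 : ℕ) + m = m from by omega]
    ring
  -- parity claim
  have hclaim : ∀ j : ℕ, ((s j < θ₁) ↔ ((s 0 < θ₁) ↔ Even j)) := by
    intro j
    induction j with
    | zero => simp
    | succ j ih =>
      have hf := hflip j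
      rw [Nat.even_add_one]
      tauto
  have hnotEven : ¬ Even m := by
    rw [Nat.even_iff]
    omega
  have := hclaim m
  rw [hper] at this
  tauto
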